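/- Let S ⊆ ℂ and let f, g, h : S → ℂ be functions with h nowhere zero on S. Let φ be the Weierstrass vector of (f, g) and φ̃ the Weierstrass vector of (f·h, g/h). If τ > 1 and |h(z) − 1| ≤ 1/τ for all z ∈ S, then ‖φ̃(z) − φ(z)‖ ≤ ‖φ(z)‖/(τ − 1) for all z ∈ S. -/

import Mathlib

/-- The Weierstrass vector of a pair `(f, g)`:
`φ = ((f/2)(1 − g²), (i f/2)(1 + g²), f g) ∈ ℂ³`. -/
noncomputable def Wvec (f g : ℂ) : EuclideanSpace ℂ (Fin 3) :=
  (WithLp.equiv 2 (Fin 3 → ℂ)).symm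
    ![f / 2 * (1 - g ^ 2), Complex.I * f / 2 * (1 + g ^ 2), f * g]

lemma par (w : ℂ) : ‖1 - w‖ ^ 2 + ‖1 + w‖ ^ 2
    = 2 + 2 * ‖w‖ ^ 2 := by
  simp only [Complex.sq_norm, Complex.normSq_apply, Complex.sub_re, Complex.sub_im,
    Complex.add_re, Complex.add_im, Complex.one_re, Complex.one_im]
  ring

lemma norm_Wvec (f g : ℂ) :
    ‖Wvec f g‖ = ‖f‖ * (1 + ‖g‖ ^ 2) / Real.sqrt 2 := by
  rw [EuclideanSpace.norm_eq]
  simp only [Wvec, WithLp.equiv_symm_apply, PiLp.toLp_apply, Fin.sum_univ_three,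
    Matrix.cons_val_zero, Matrix.cons_val_one, Matrix.head_cons,
    Matrix.cons_val_two, Matrix.tail_cons]
  have key : ‖f / 2 * (1 - g ^ 2)‖ ^ 2 +
      ‖Complex.I * f / 2 * (1 + g ^ 2)‖ ^ 2 +
      ‖f * g‖ ^ 2
      = (‖f‖ * (1 + ‖g‖ ^ 2)) ^ 2 / 2 := by
    have h1 := par (g ^ 2)
    simp only [norm_mul, norm_div, Complex.norm_two, Complex.norm_I, norm_pow, one_mul] at *
    nlinarith [norm_nonneg f, norm_nonneg g, sq_nonneg (‖g‖)]
  rw [key]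
  rw [show (‖f‖ * (1 + ‖g‖ ^ 2)) ^ 2 / 2
      = ((‖f‖ * (1 + ‖g‖ ^ 2)) / Real.sqrt 2) ^ 2 by
    rw [div_pow, Real.sq_sqrt (by norm_num)]]
  exact Real.sqrt_sq (by positivity)

set_option maxHeartbeats 1000000 in
lemma norm_diff_sq (f g h : ℂ) (hh : h ≠ 0) :
    ‖Wvec (f * h) (g / h) - Wvec f g‖ ^ 2 =
      ‖h - 1‖ ^ 2 * ‖f‖ ^ 2 / 2 *
        (1 + ‖g‖ ^ 4 / ‖h‖ ^ 2) := by
  have hv : Wvec (f * h) (g / h) - Wvec f g =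
      (WithLp.equiv 2 (Fin 3 → ℂ)).symm
        ![(h - 1) * (f / 2 * (1 + g ^ 2 / h)),
          Complex.I * ((h - 1) * (f / 2 * (1 - g ^ 2 / h))), 0] := by
    ext i
    fin_cases i <;>
      simp only [Wvec, WithLp.equiv_symm_apply, PiLp.toLp_apply, PiLp.sub_apply,
        Matrix.cons_val_zero, Matrix.cons_val_one, Matrix.head_cons,
        Matrix.cons_val_two, Matrix.tail_cons, Fin.zero_eta, Fin.mk_one, Fin.reduceFinMk,
        Matrix.cons_val] <;>
      field_simp <;> ring
  rw [hv, EuclideanSpace.norm_eq, Real.sq_sqrt (by positivity)]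
  simp only [WithLp.equiv_symm_apply, PiLp.toLp_apply, Fin.sum_univ_three,
    Matrix.cons_val_zero, Matrix.cons_val_one, Matrix.head_cons,
    Matrix.cons_val_two, Matrix.tail_cons, norm_mul,
    norm_div, Complex.norm_I, one_mul, norm_zero, norm_pow, Complex.norm_two]
  have h1 := par (g ^ 2 / h)
  simp only [norm_div, norm_pow] at h1
  linear_combination (‖h - 1‖ ^ 2 * ‖f‖ ^ 2 / 4) * h1

/-- If `h` is nowhere zero on `S`, `τ > 1` and `|h − 1| ≤ 1/τ` on `S`, then the Weierstrass
vectors `φ` of `(f, g)` and `φ̃` of `(f·h, g/h)` satisfy `‖φ̃ − φ‖ ≤ ‖φ‖/(τ − 1)` on `S`. -/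
theorem weierstrass_perturbation_close (S : Set ℂ) (f g h : ℂ → ℂ) (τ : ℝ)
    (hτ : 1 < τ) (hh : ∀ z ∈ S, h z ≠ 0)
    (hb : ∀ z ∈ S, ‖h z - 1‖ ≤ 1 / τ) :
    ∀ z ∈ S, ‖Wvec (f z * h z) (g z / h z) - Wvec (f z) (g z)‖ ≤
      ‖Wvec (f z) (g z)‖ / (τ - 1) := by
  intro z hz
  have hτ0 : (0:ℝ) < τ := by linarith
  have ht1 : (0:ℝ) < τ - 1 := by linarith
  have hhz : h z ≠ 0 := hh z hz
  set E := ‖h z - 1‖ with hEdef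
  set F := ‖f z‖ with hFdef
  set G := ‖g z‖ with hGdef
  set H := ‖h z‖ with hHdef
  have hE0 : 0 ≤ E := norm_nonneg _
  have hF0 : 0 ≤ F := norm_nonneg _
  have hG0 : 0 ≤ G := norm_nonneg _
  have hH0 : 0 < H := by
    rw [hHdef]; exact norm_pos_iff.mpr hhz
  have hEτ : E * τ ≤ 1 := by
    have := hb z hz
    rw [← hEdef] at this
    calc E * τ ≤ (1 / τ) * τ := by nlinarith
      _ = 1 := by field_simp
  have hHτ : τ - 1 ≤ H * τ := by
    have h1 : (1:ℝ) ≤ H + E := by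
      have := norm_sub_le (h z) 1
      calc (1:ℝ) = ‖h z - (h z - 1)‖ := by norm_num
        _ ≤ ‖h z‖ + ‖h z - 1‖ := norm_sub_le _ _
        _ = H + E := rfl
    nlinarith
  have q : E * (τ - 1) ≤ H :=
    calc E * (τ - 1) ≤ E * (H * τ) := by nlinarith
      _ = (E * τ) * H := by ring
      _ ≤ 1 * H := by nlinarith
      _ = H := one_mul H
  have r : E * (τ - 1) ≤ 1 := by nlinarith
  have hEt0 : 0 ≤ E * (τ - 1) := mul_nonneg hE0 ht1.le
  have p1 : E ^ 2 * (τ - 1) ^ 2 ≤ 1 := by nlinarith [mul_self_le_mul_self hEt0 r]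
  have p0 : E ^ 2 * (τ - 1) ^ 2 ≤ H ^ 2 := by nlinarith [mul_self_le_mul_self hEt0 q]
  set D := G ^ 4 / H ^ 2 with hDdef
  have hD0 : 0 ≤ D := by positivity
  have hDH : D * H ^ 2 = G ^ 4 := by
    rw [hDdef]; field_simp
  have p2 : D * (E ^ 2 * (τ - 1) ^ 2) ≤ G ^ 4 := by
    calc D * (E ^ 2 * (τ - 1) ^ 2) ≤ D * H ^ 2 := by nlinarith
      _ = G ^ 4 := hDH
  have h2 : 0 ≤ ‖Wvec (f z) (g z)‖ / (τ - 1) := div_nonneg (norm_nonneg _) ht1.le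
  have sq_ineq : ‖Wvec (f z * h z) (g z / h z) - Wvec (f z) (g z)‖ ^ 2 ≤
      (‖Wvec (f z) (g z)‖ / (τ - 1)) ^ 2 := by
    rw [norm_diff_sq _ _ _ hhz, norm_Wvec, div_pow, div_pow,
      Real.sq_sqrt (by norm_num : (0:ℝ) ≤ 2), ← hEdef, ← hFdef, ← hGdef, ← hHdef, ← hDdef,
      le_div_iff₀ (by positivity : (0:ℝ) < (τ - 1) ^ 2)]
    nlinarith [mul_le_mul_of_nonneg_left p1 (sq_nonneg F),
      mul_le_mul_of_nonneg_left p2 (sq_nonneg F), sq_nonneg (F * G)]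
  calc ‖Wvec (f z * h z) (g z / h z) - Wvec (f z) (g z)‖
      = Real.sqrt (‖Wvec (f z * h z) (g z / h z) - Wvec (f z) (g z)‖ ^ 2) :=
        (Real.sqrt_sq (norm_nonneg _)).symm
    _ ≤ Real.sqrt ((‖Wvec (f z) (g z)‖ / (τ - 1)) ^ 2) := Real.sqrt_le_sqrt sq_ineq
    _ = ‖Wvec (f z) (g z)‖ / (τ - 1) := Real.sqrt_sq h2
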